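/- Let R be an invertible N²×N² complex matrix satisfying the Yang–Baxter equation, S an invertible M²×M² complex matrix satisfying the Yang–Baxter equation, and μ ≠ 0 a complex number. Define the square matrix T indexed by pairs from Fin N ⊕ Fin M by: T(eᵢ ⊗ eⱼ) = R(eᵢ ⊗ eⱼ) when both indices come from Fin N; T(eᵢ ⊗ eⱼ) = S applied to the corresponding pair when both indices come from Fin M; and T(eᵢ ⊗ eⱼ) = μ · (eⱼ ⊗ eᵢ) when the indices come from different summands. Then T is invertible and satisfies the Yang–Baxter equation. -/

import Mathlib

set_option maxHeartbeats 2000000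

open Matrix Kronecker

/-- `R ⊗ₖ 1`, viewed as a matrix indexed by `ι × ι × ι` via the canonical
associativity reindexing. -/
def ybL {ι : Type*} [DecidableEq ι] (R : Matrix (ι × ι) (ι × ι) ℂ) :
    Matrix (ι × ι × ι) (ι × ι × ι) ℂ :=
  Matrix.reindex (Equiv.prodAssoc ι ι ι) (Equiv.prodAssoc ι ι ι)
    (R ⊗ₖ (1 : Matrix ι ι ℂ))

/-- `1 ⊗ₖ R`, indexed by `ι × ι × ι`. -/
def ybR {ι : Type*} [DecidableEq ι] (R : Matrix (ι × ι) (ι × ι) ℂ) :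
    Matrix (ι × ι × ι) (ι × ι × ι) ℂ :=
  (1 : Matrix ι ι ℂ) ⊗ₖ R

/-- The (constant) Yang–Baxter equation. -/
def SatisfiesYBE {ι : Type*} [Fintype ι] [DecidableEq ι]
    (R : Matrix (ι × ι) (ι × ι) ℂ) : Prop :=
  ybL R * ybR R * ybL R = ybR R * ybL R * ybR R

/-- The direct sum `R ⊞_μ S`: on basis vectors `e_p ⊗ e_q` of
`ℂ^(N+M) ⊗ ℂ^(N+M)` (indices in `Fin N ⊕ Fin M`), it acts as `R` when both
indices are in `Fin N`, as `S` when both are in `Fin M`, and sends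
`e_p ⊗ e_q ↦ μ • (e_q ⊗ e_p)` for mixed indices. -/
def dsum {N M : ℕ} (R : Matrix (Fin N × Fin N) (Fin N × Fin N) ℂ)
    (S : Matrix (Fin M × Fin M) (Fin M × Fin M) ℂ) (μ : ℂ) :
    Matrix ((Fin N ⊕ Fin M) × (Fin N ⊕ Fin M)) ((Fin N ⊕ Fin M) × (Fin N ⊕ Fin M)) ℂ :=
  Matrix.of fun p q =>
    match p, q with
    | (Sum.inl a, Sum.inl b), (Sum.inl i, Sum.inl j) => R (a, b) (i, j)
    | (Sum.inr a, Sum.inr b), (Sum.inr i, Sum.inr j) => S (a, b) (i, j)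
    | (Sum.inr b, Sum.inl a), (Sum.inl i, Sum.inr j) => if a = i ∧ b = j then μ else 0
    | (Sum.inl b, Sum.inr a), (Sum.inr i, Sum.inl j) => if a = i ∧ b = j then μ else 0
    | _, _ => 0

section Aux

variable {ι : Type*} [Fintype ι] [DecidableEq ι]

private lemma triple_L (A B C : Matrix (ι×ι) (ι×ι) ℂ) (p q : ι×ι×ι) :
  (ybL A * ybR B * ybL C) p q = ∑ a, ∑ b, ∑ c,
    A (p.1, p.2.1) (a,b) * (B (b, p.2.2) (c, q.2.2) * C (a,c) (q.1,q.2.1)) := by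
  obtain ⟨p1,p2,p3⟩ := p; obtain ⟨q1,q2,q3⟩ := q
  simp [ybL, ybR, mul_apply, Fintype.sum_prod_type, Matrix.one_apply, Finset.mul_sum,
    Finset.sum_mul, mul_assoc]
  exact Finset.sum_congr rfl fun a _ => Finset.sum_comm

private lemma triple_R (A B C : Matrix (ι×ι) (ι×ι) ℂ) (p q : ι×ι×ι) :
  (ybR A * ybL B * ybR C) p q = ∑ a, ∑ b, ∑ c,
    A (p.2.1, p.2.2) (a,b) * (B (p.1, a) (q.1, c) * C (c,b) (q.2.1,q.2.2)) := by
  obtain ⟨p1,p2,p3⟩ := p; obtain ⟨q1,q2,q3⟩ := q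
  simp [ybL, ybR, mul_apply, Fintype.sum_prod_type, Matrix.one_apply, Finset.mul_sum,
    Finset.sum_mul, mul_assoc]
  calc ∑ a, ∑ b, ∑ c, A (p2, p3) (c, b) * (B (p1, c) (q1, a) * C (a, b) (q2, q3))
      = ∑ a, ∑ c, ∑ b, A (p2, p3) (c, b) * (B (p1, c) (q1, a) * C (a, b) (q2, q3)) :=
        Finset.sum_congr rfl fun _ _ => Finset.sum_comm
    _ = ∑ c, ∑ a, ∑ b, A (p2, p3) (c, b) * (B (p1, c) (q1, a) * C (a, b) (q2, q3)) :=
        Finset.sum_comm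
    _ = ∑ c, ∑ b, ∑ a, A (p2, p3) (c, b) * (B (p1, c) (q1, a) * C (a, b) (q2, q3)) :=
        Finset.sum_congr rfl fun _ _ => Finset.sum_comm

private lemma ybe_iff (A : Matrix (ι×ι) (ι×ι) ℂ) : SatisfiesYBE A ↔ ∀ p1 p2 p3 q1 q2 q3 : ι,
    (∑ a, ∑ b, ∑ c, A (p1,p2) (a,b) * (A (b,p3) (c,q3) * A (a,c) (q1,q2)))
    = ∑ a, ∑ b, ∑ c, A (p2,p3) (a,b) * (A (p1,a) (q1,c) * A (c,b) (q2,q3)) := by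
  constructor
  · intro h p1 p2 p3 q1 q2 q3
    have := congrFun (congrFun h (p1,p2,p3)) (q1,q2,q3)
    rwa [triple_L, triple_R] at this
  · intro h
    ext ⟨p1,p2,p3⟩ ⟨q1,q2,q3⟩
    rw [triple_L, triple_R]
    exact h p1 p2 p3 q1 q2 q3

variable {N M : ℕ} (R : Matrix (Fin N × Fin N) (Fin N × Fin N) ℂ)
    (S : Matrix (Fin M × Fin M) (Fin M × Fin M) ℂ) (μ : ℂ)

private lemma ds1 (a b i j) : dsum R S μ (Sum.inl a, Sum.inl b) (Sum.inl i, Sum.inl j) = R (a,b) (i,j) := rfl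
private lemma ds2 (a b i j) : dsum R S μ (Sum.inr a, Sum.inr b) (Sum.inr i, Sum.inr j) = S (a,b) (i,j) := rfl
private lemma ds3 (a b i j) : dsum R S μ (Sum.inr b, Sum.inl a) (Sum.inl i, Sum.inr j) = if a = i ∧ b = j then μ else 0 := rfl
private lemma ds4 (a b i j) : dsum R S μ (Sum.inl b, Sum.inr a) (Sum.inr i, Sum.inl j) = if a = i ∧ b = j then μ else 0 := rfl
private lemma ds5 (a b i j) : dsum R S μ (Sum.inl a, Sum.inl b) (Sum.inl i, Sum.inr j) = 0 := rfl
private lemma ds6 (a b i j) : dsum R S μ (Sum.inl a, Sum.inl b) (Sum.inr i, Sum.inl j) = 0 := rfl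
private lemma ds7 (a b i j) : dsum R S μ (Sum.inl a, Sum.inl b) (Sum.inr i, Sum.inr j) = 0 := rfl
private lemma ds8 (a b i j) : dsum R S μ (Sum.inr a, Sum.inr b) (Sum.inl i, Sum.inl j) = 0 := rfl
private lemma ds9 (a b i j) : dsum R S μ (Sum.inr a, Sum.inr b) (Sum.inl i, Sum.inr j) = 0 := rfl
private lemma ds10 (a b i j) : dsum R S μ (Sum.inr a, Sum.inr b) (Sum.inr i, Sum.inl j) = 0 := rfl
private lemma ds11 (a b i j) : dsum R S μ (Sum.inl a, Sum.inr b) (Sum.inl i, Sum.inl j) = 0 := rfl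
private lemma ds12 (a b i j) : dsum R S μ (Sum.inl a, Sum.inr b) (Sum.inl i, Sum.inr j) = 0 := rfl
private lemma ds13 (a b i j) : dsum R S μ (Sum.inl a, Sum.inr b) (Sum.inr i, Sum.inr j) = 0 := rfl
private lemma ds14 (a b i j) : dsum R S μ (Sum.inr a, Sum.inl b) (Sum.inl i, Sum.inl j) = 0 := rfl
private lemma ds15 (a b i j) : dsum R S μ (Sum.inr a, Sum.inl b) (Sum.inr i, Sum.inl j) = 0 := rfl
private lemma ds16 (a b i j) : dsum R S μ (Sum.inr a, Sum.inl b) (Sum.inr i, Sum.inr j) = 0 := rfl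

private lemma dsum_right_inv (A : Matrix (Fin N × Fin N) (Fin N × Fin N) ℂ)
    (B : Matrix (Fin M × Fin M) (Fin M × Fin M) ℂ)
    (hμ : μ ≠ 0) (hR1 : R * A = 1) (hS1 : S * B = 1) :
    dsum R S μ * dsum A B μ⁻¹ = 1 := by
  have hR := fun a b i j => congrFun (congrFun hR1 (a,b)) (i,j)
  have hS := fun a b i j => congrFun (congrFun hS1 (a,b)) (i,j)
  simp only [mul_apply, Fintype.sum_prod_type, Matrix.one_apply, Prod.mk.injEq] at hR hS
  ext ⟨p1,p2⟩ ⟨q1,q2⟩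
  rcases p1 with a|a <;> rcases p2 with b|b <;> rcases q1 with i|i <;> rcases q2 with j|j <;>
    simp [mul_apply, Fintype.sum_prod_type, Fintype.sum_sum_type, Matrix.one_apply,
      Prod.ext_iff, Finset.sum_ite_eq, hμ, hR, hS, ite_and, mul_comm,
      ds1, ds2, ds3, ds4, ds5, ds6, ds7, ds8, ds9, ds10, ds11, ds12, ds13, ds14, ds15, ds16]
  all_goals (split_ifs <;> simp_all)

end Aux

/-- the direct sum `R ⊞_μ S` of invertible Yang–Baxter solutions
(with `μ ≠ 0`) is again an invertible Yang–Baxter solution. -/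
theorem dsum_isUnit_and_satisfiesYBE (N M : ℕ)
    (R : Matrix (Fin N × Fin N) (Fin N × Fin N) ℂ)
    (S : Matrix (Fin M × Fin M) (Fin M × Fin M) ℂ) (μ : ℂ) (hμ : μ ≠ 0)
    (hRu : IsUnit R) (hSu : IsUnit S)
    (hRY : SatisfiesYBE R) (hSY : SatisfiesYBE S) :
    IsUnit (dsum R S μ) ∧ SatisfiesYBE (dsum R S μ) := by
  constructor
  · have hR1 : R * R⁻¹ = 1 :=
      Matrix.mul_nonsing_inv R ((Matrix.isUnit_iff_isUnit_det R).mp hRu)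
    have hS1 : S * S⁻¹ = 1 :=
      Matrix.mul_nonsing_inv S ((Matrix.isUnit_iff_isUnit_det S).mp hSu)
    exact (Matrix.isUnit_iff_isUnit_det _).mpr
      (Matrix.isUnit_det_of_right_inverse (dsum_right_inv R S μ R⁻¹ S⁻¹ hμ hR1 hS1))
  · rw [ybe_iff]
    have hR := (ybe_iff R).mp hRY
    have hS := (ybe_iff S).mp hSY
    intro p1 p2 p3 q1 q2 q3
    rcases p1 with a1|a1 <;> rcases p2 with a2|a2 <;> rcases p3 with a3|a3 <;>
      rcases q1 with b1|b1 <;> rcases q2 with b2|b2 <;> rcases q3 with b3|b3 <;>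
      simp only [Fintype.sum_sum_type, zero_mul, mul_zero, Finset.sum_const_zero,
        add_zero, zero_add,
        ds1, ds2, ds3, ds4, ds5, ds6, ds7, ds8, ds9, ds10, ds11, ds12, ds13, ds14, ds15, ds16]
    all_goals simp only [mul_ite, ite_mul, mul_zero, zero_mul, ite_and,
      Finset.sum_ite_eq, Finset.sum_ite_eq', Finset.mem_univ, if_true,
      Finset.sum_const_zero, add_zero, zero_add, hR, hS]
    all_goals simp only [Finset.sum_ite_irrel, Finset.sum_const_zero,
      Finset.sum_ite_eq, Finset.sum_ite_eq', Finset.mem_univ, if_true,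
      mul_ite, ite_mul, mul_zero, zero_mul]
    all_goals split_ifs <;> ring
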